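/- For all n ≥ 0, Σ_{σ ∈ Av_n(132,213)} q^{maj σ} t^{des σ} = (1+qt)(1+q^2 t)⋯(1+q^{n-1} t), where des σ = #Des σ and maj σ = Σ_{i∈Des σ} i. -/

import Mathlib

open scoped Classical

/-- `σ` contains the pattern `π`. -/
def permContains {n k : ℕ} (σ : Equiv.Perm (Fin n)) (π : Equiv.Perm (Fin k)) : Prop :=
  ∃ f : Fin k → Fin n, StrictMono f ∧ ∀ i j : Fin k, π i < π j ↔ σ (f i) < σ (f j)

/-- `σ` avoids the pattern `π`. -/
def permAvoids {n k : ℕ} (σ : Equiv.Perm (Fin n)) (π : Equiv.Perm (Fin k)) : Prop :=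
  ¬ permContains σ π

def p123 : Equiv.Perm (Fin 3) := 1
def p132 : Equiv.Perm (Fin 3) := Equiv.swap 1 2
def p213 : Equiv.Perm (Fin 3) := Equiv.swap 0 1
def p231 : Equiv.Perm (Fin 3) := finRotate 3
def p312 : Equiv.Perm (Fin 3) := (finRotate 3)⁻¹
def p321 : Equiv.Perm (Fin 3) := Equiv.swap 0 2

/-- Descent set of a permutation, as a set of (1-based) positions `i` with `a_i > a_{i+1}`. -/
def desSet {n : ℕ} (σ : Equiv.Perm (Fin n)) : Finset ℕ :=
  (Finset.Ico 1 n).filter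
    (fun i => ∀ h : i < n, σ ⟨i, h⟩ < σ ⟨i - 1, Nat.lt_of_le_of_lt (Nat.sub_le i 1) h⟩)

/-- Major index: sum of descent positions. -/
def majIdx {n : ℕ} (σ : Equiv.Perm (Fin n)) : ℕ := ∑ i ∈ desSet σ, i

/-- Number of descents. -/
def desNum {n : ℕ} (σ : Equiv.Perm (Fin n)) : ℕ := (desSet σ).card

/-- Number of inversions. -/
def invNum {n : ℕ} (σ : Equiv.Perm (Fin n)) : ℕ :=
  ((Finset.univ : Finset (Fin n × Fin n)).filter (fun p => p.1 < p.2 ∧ σ p.2 < σ p.1)).card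

namespace MD

variable {n : ℕ}

/-- Largest element of `S` that is `≤ p`, or `0` if none. -/
def startS (S : Finset ℕ) (p : ℕ) : ℕ := (S.filter (· ≤ p)).sup id

/-- Smallest element of `S` that is `> p`, or `n` if none. -/
noncomputable def endS (n : ℕ) (S : Finset ℕ) (p : ℕ) : ℕ := sInf {s | (s ∈ S ∧ p < s) ∨ s = n}

lemma startS_le (S : Finset ℕ) (p : ℕ) : startS S p ≤ p :=
  Finset.sup_le fun s hs => (Finset.mem_filter.1 hs).2

lemma le_startS {S : Finset ℕ} {s p : ℕ} (hs : s ∈ S) (h : s ≤ p) : s ≤ startS S p :=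
  Finset.le_sup (f := id) (Finset.mem_filter.2 ⟨hs, h⟩)

lemma startS_mem {S : Finset ℕ} {p : ℕ} (h : 0 < startS S p) : startS S p ∈ S := by
  rcases Finset.eq_empty_or_nonempty (S.filter (· ≤ p)) with he | hne
  · simp [startS, he] at h
  · obtain ⟨i, hi, hieq⟩ := Finset.exists_mem_eq_sup _ hne id
    rw [startS, hieq]
    exact (Finset.mem_filter.1 hi).1

lemma endS_set_nonempty (S : Finset ℕ) (p : ℕ) :
    {s | (s ∈ S ∧ p < s) ∨ s = n}.Nonempty := ⟨n, Or.inr rfl⟩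

lemma endS_le {S : Finset ℕ} {s p : ℕ} (hs : s ∈ S) (h : p < s) : endS n S p ≤ s :=
  Nat.sInf_le (Or.inl ⟨hs, h⟩)

lemma endS_le_n (S : Finset ℕ) (p : ℕ) : endS n S p ≤ n := Nat.sInf_le (Or.inr rfl)

lemma lt_endS {S : Finset ℕ} {p : ℕ} (hp : p < n) : p < endS n S p := by
  rcases Nat.sInf_mem (endS_set_nonempty (n := n) S p) with ⟨_, h⟩ | h
  · exact h
  · unfold endS
    omega

lemma endS_mem {S : Finset ℕ} {p : ℕ} (h : endS n S p < n) : endS n S p ∈ S := by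
  rcases Nat.sInf_mem (endS_set_nonempty (n := n) S p) with ⟨h1, _⟩ | h1
  · exact h1
  · unfold endS at h ⊢
    omega

lemma startS_congr {S : Finset ℕ} {p q : ℕ} (hpq : p ≤ q)
    (h : ∀ s ∈ S, ¬(p < s ∧ s ≤ q)) : startS S p = startS S q := by
  unfold startS
  congr 1
  apply Finset.filter_congr
  intro s hs
  have := h s hs
  omega

lemma endS_congr {S : Finset ℕ} {p q : ℕ} (hpq : p ≤ q)
    (h : ∀ s ∈ S, ¬(p < s ∧ s ≤ q)) : endS n S p = endS n S q := by
  unfold endS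
  congr 1
  ext s
  simp only [Set.mem_setOf_eq]
  constructor
  · rintro (⟨h1, h2⟩ | h3)
    · exact Or.inl ⟨h1, by have := h s h1; omega⟩
    · exact Or.inr h3
  · rintro (⟨h1, h2⟩ | h3)
    · exact Or.inl ⟨h1, by omega⟩
    · exact Or.inr h3

/-- The value of the unique avoider with descent set `S` at position `p` (0-indexed). -/
noncomputable def fval (n : ℕ) (S : Finset ℕ) (p : ℕ) : ℕ := n - endS n S p + (p - startS S p)

lemma fval_lt {S : Finset ℕ} {p : ℕ} (hp : p < n) : fval n S p < n := by
  have h1 := startS_le S p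
  have h2 := lt_endS (n := n) (S := S) hp
  have h3 := endS_le_n (n := n) S p
  unfold fval
  omega

lemma fval_cross {S : Finset ℕ} {p q s0 : ℕ} (hq : q < n)
    (hs0 : s0 ∈ S) (h1 : p < s0) (h2 : s0 ≤ q) : fval n S q < fval n S p := by
  have ha := endS_le (n := n) hs0 h1
  have hb := le_startS hs0 h2
  have hc := startS_le S q
  have hd := startS_le S p
  have he := lt_endS (n := n) (S := S) hq
  have hf := endS_le_n (n := n) S q
  have hg := endS_le_n (n := n) S p
  unfold fval
  omega

lemma fval_run {S : Finset ℕ} {p q : ℕ} (hq : q < n) (hpq : p ≤ q)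
    (h : ∀ s ∈ S, ¬(p < s ∧ s ≤ q)) : fval n S q = fval n S p + (q - p) := by
  have h1 := startS_congr hpq h
  have h2 := endS_congr (n := n) hpq h
  have h3 := startS_le S p
  unfold fval
  rw [← h1, ← h2]
  omega

noncomputable def ffun (n : ℕ) (S : Finset ℕ) (p : Fin n) : Fin n := ⟨fval n S p.val, fval_lt p.isLt⟩

lemma ffun_inj (S : Finset ℕ) : Function.Injective (ffun n S) := by
  have key : ∀ p q : Fin n, p < q → ffun n S p ≠ ffun n S q := by
    intro p q hpq hne
    have hv : fval n S p.val = fval n S q.val := congrArg Fin.val hne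
    by_cases hc : ∃ s ∈ S, p.val < s ∧ s ≤ q.val
    · obtain ⟨s0, hs0, h1, h2⟩ := hc
      have := fval_cross (n := n) q.isLt hs0 h1 h2
      omega
    · push_neg at hc
      have hpq' : p.val < q.val := hpq
      have := fval_run (n := n) q.isLt (le_of_lt hpq') (fun s hs h => by have := hc s hs h.1; omega)
      omega
  intro p q h
  rcases lt_trichotomy p q with hlt | heq | hlt
  · exact absurd h (key p q hlt)
  · exact heq
  · exact absurd h.symm (key q p hlt)

/-- The unique `{132,213}`-avoiding permutation with descent set `S`. -/
noncomputable def fperm (n : ℕ) (S : Finset ℕ) : Equiv.Perm (Fin n) :=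
  Equiv.ofBijective _ (Finite.injective_iff_bijective.1 (ffun_inj S))

lemma fperm_apply (S : Finset ℕ) (p : Fin n) :
    fperm n S p = ⟨fval n S p.val, fval_lt p.isLt⟩ := rfl

end MD
section Frag
variable {n : ℕ}
open MD

lemma mem_desSet {σ : Equiv.Perm (Fin n)} {i : ℕ} (h1 : 1 ≤ i) (h2 : i < n) :
    i ∈ desSet σ ↔ σ ⟨i, h2⟩ < σ ⟨i - 1, by omega⟩ := by
  constructor
  · intro h
    exact ((Finset.mem_filter.1 h).2) h2
  · intro h
    exact Finset.mem_filter.2 ⟨Finset.mem_Ico.2 ⟨h1, h2⟩, fun _ => h⟩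

lemma desSet_subset (σ : Equiv.Perm (Fin n)) : desSet σ ⊆ Finset.Ico 1 n :=
  Finset.filter_subset _ _

lemma desSet_fperm (S : Finset ℕ) (hS : S ⊆ Finset.Ico 1 n) : desSet (fperm n S) = S := by
  ext i
  by_cases hi : 1 ≤ i ∧ i < n
  · obtain ⟨hi1, hi2⟩ := hi
    rw [mem_desSet hi1 hi2]
    constructor
    · intro h
      by_contra hiS
      -- same block: fval (i-1) < fval i
      have hrun := fval_run (n := n) (p := i - 1) (q := i) hi2 (by omega)
        (fun s hs hh => by
          have hs' := hS hs
          rw [Finset.mem_Ico] at hs'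
          have : s = i := by omega
          exact hiS (this ▸ hs))
      rw [Fin.lt_def] at h
      simp only [fperm_apply] at h
      omega
    · intro hiS
      have := fval_cross (n := n) (p := i - 1) (q := i) hi2 hiS (by omega) (le_refl i)
      rw [Fin.lt_def]
      simp only [fperm_apply]
      omega
  · constructor
    · intro h
      have := Finset.mem_Ico.1 (desSet_subset _ h)
      omega
    · intro h
      have := Finset.mem_Ico.1 (hS h)
      omega

lemma contains132_of {σ : Equiv.Perm (Fin n)} {i j k : Fin n} (hij : i < j) (hjk : j < k)
    (h1 : σ i < σ k) (h2 : σ k < σ j) : permContains σ p132 := by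
  refine ⟨![i, j, k], ?_, ?_⟩
  · intro a b hab
    fin_cases a <;> fin_cases b <;>
      simp_all [Matrix.cons_val_zero, Matrix.cons_val_one, Matrix.head_cons] <;>
      first
        | exact hij | exact hjk | exact hij.trans hjk
        | exact absurd hab (by decide)
  · intro a b
    fin_cases a <;> fin_cases b <;>
      simp only [Matrix.cons_val_zero, Matrix.cons_val_one, Matrix.head_cons,
        Matrix.cons_val_two, Matrix.tail_cons] <;>
      first
        | exact iff_of_true (by decide) h1
        | exact iff_of_true (by decide) h2
        | exact iff_of_true (by decide) (h1.trans h2)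
        | exact iff_of_false (by decide) (lt_asymm h1)
        | exact iff_of_false (by decide) (lt_asymm h2)
        | exact iff_of_false (by decide) (lt_asymm (h1.trans h2))
        | exact iff_of_false (by decide) (lt_irrefl _)

lemma contains213_of {σ : Equiv.Perm (Fin n)} {i j k : Fin n} (hij : i < j) (hjk : j < k)
    (h1 : σ j < σ i) (h2 : σ i < σ k) : permContains σ p213 := by
  refine ⟨![i, j, k], ?_, ?_⟩
  · intro a b hab
    fin_cases a <;> fin_cases b <;>
      simp_all [Matrix.cons_val_zero, Matrix.cons_val_one, Matrix.head_cons] <;>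
      first
        | exact hij | exact hjk | exact hij.trans hjk
        | exact absurd hab (by decide)
  · intro a b
    fin_cases a <;> fin_cases b <;>
      simp only [Matrix.cons_val_zero, Matrix.cons_val_one, Matrix.head_cons,
        Matrix.cons_val_two, Matrix.tail_cons] <;>
      first
        | exact iff_of_true (by decide) h1
        | exact iff_of_true (by decide) h2
        | exact iff_of_true (by decide) (h1.trans h2)
        | exact iff_of_false (by decide) (lt_asymm h1)
        | exact iff_of_false (by decide) (lt_asymm h2)
        | exact iff_of_false (by decide) (lt_asymm (h1.trans h2))
        | exact iff_of_false (by decide) (lt_irrefl _)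

end Frag
section Frag2
variable {n : ℕ}
open MD

lemma fperm_lt_iff (S : Finset ℕ) (p q : Fin n) :
    fperm n S p < fperm n S q ↔ fval n S p.val < fval n S q.val := by
  simp only [fperm_apply, Fin.lt_def]

/-- If `p < q` and `fval p < fval q`, they are in the same block. -/
lemma sameBlock_of_fval_lt {S : Finset ℕ} {p q : Fin n} (hpq : p < q)
    (h : fval n S p.val < fval n S q.val) : ∀ s ∈ S, ¬(p.val < s ∧ s ≤ q.val) := by
  intro s hs hh
  have := fval_cross (n := n) q.isLt hs hh.1 hh.2
  omega

lemma fperm_avoids_132 (S : Finset ℕ) : permAvoids (fperm n S) p132 := by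
  rintro ⟨g, hg, hpat⟩
  have h01 : g 0 < g 1 := hg (by decide)
  have h12 : g 1 < g 2 := hg (by decide)
  have e02 : fperm n S (g 0) < fperm n S (g 2) := (hpat 0 2).1 (by decide)
  have e21 : fperm n S (g 2) < fperm n S (g 1) := (hpat 2 1).1 (by decide)
  rw [fperm_lt_iff] at e02 e21
  have hsb := sameBlock_of_fval_lt (h01.trans h12) e02
  have hrun := fval_run (n := n) (p := (g 1).val) (q := (g 2).val) (g 2).isLt
    (le_of_lt h12) (fun s hs hh => hsb s hs ⟨lt_trans h01 hh.1, hh.2⟩)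
  have : (g 1).val < (g 2).val := h12
  omega

lemma fperm_avoids_213 (S : Finset ℕ) : permAvoids (fperm n S) p213 := by
  rintro ⟨g, hg, hpat⟩
  have h01 : g 0 < g 1 := hg (by decide)
  have h12 : g 1 < g 2 := hg (by decide)
  have e10 : fperm n S (g 1) < fperm n S (g 0) := (hpat 1 0).1 (by decide)
  have e02 : fperm n S (g 0) < fperm n S (g 2) := (hpat 0 2).1 (by decide)
  rw [fperm_lt_iff] at e10 e02
  have hsb := sameBlock_of_fval_lt (h01.trans h12) e02
  have hrun := fval_run (n := n) (p := (g 0).val) (q := (g 1).val) (g 1).isLt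
    (le_of_lt h01) (fun s hs hh => hsb s hs ⟨hh.1, le_trans hh.2 (le_of_lt h12)⟩)
  have : (g 0).val < (g 1).val := h01
  omega

/-- In an avoider, every ascent is by exactly one. -/
lemma ascent_succ {σ : Equiv.Perm (Fin n)}
    (hav : permAvoids σ p132 ∧ permAvoids σ p213)
    {p r : Fin n} (hr : r.val = p.val + 1) (h : σ p < σ r) :
    (σ r).val = (σ p).val + 1 := by
  by_contra hne
  have hlt : (σ p).val < (σ r).val := h
  have hv : (σ p).val + 1 < n := by have := (σ r).isLt; omega
  set v : Fin n := ⟨(σ p).val + 1, hv⟩ with hvdef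
  set j := σ.symm v with hjdef
  have hσj : σ j = v := Equiv.apply_symm_apply σ v
  have hjp : j.val ≠ p.val := by
    intro hh
    have : j = p := Fin.ext hh
    rw [this] at hσj
    have := congrArg Fin.val hσj
    simp [hvdef] at this
  have hjr : j.val ≠ r.val := by
    intro hh
    have : j = r := Fin.ext hh
    rw [this] at hσj
    have := congrArg Fin.val hσj
    simp [hvdef] at this
    omega
  rcases (by omega : j.val < p.val ∨ r.val < j.val) with hc | hc
  · -- pattern 213 via (j, p, r) : σ p < σ j < σ r
    exact hav.2 (contains213_of (i := j) (j := p) (k := r)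
      (by rw [Fin.lt_def]; omega) (by rw [Fin.lt_def]; omega)
      (by rw [Fin.lt_def, hσj]; simp [hvdef]) (by rw [Fin.lt_def, hσj]; simp [hvdef]; omega))
  · -- pattern 132 via (p, r, j) : σ p < σ j < σ r
    exact hav.1 (contains132_of (i := p) (j := r) (k := j)
      (by rw [Fin.lt_def]; omega) (by rw [Fin.lt_def]; omega)
      (by rw [Fin.lt_def, hσj]; simp [hvdef]) (by rw [Fin.lt_def, hσj]; simp [hvdef]; omega))

/-- In an avoider, anything before a descent is bigger than anything from the descent on. -/
lemma cross_avoid {σ : Equiv.Perm (Fin n)}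
    (hav : permAvoids σ p132 ∧ permAvoids σ p213)
    {d : ℕ} (hd : d ∈ desSet σ) :
    ∀ p q : Fin n, p.val < d → d ≤ q.val → σ q < σ p := by
  have hd' := Finset.mem_Ico.1 (desSet_subset σ hd)
  obtain ⟨hd1, hd2⟩ := hd'
  have hdes : σ ⟨d, hd2⟩ < σ ⟨d - 1, by omega⟩ := (mem_desSet hd1 hd2).1 hd
  have stepA : ∀ p : Fin n, p.val < d → σ ⟨d, hd2⟩ < σ p := by
    intro p hp
    by_cases hp1 : p.val = d - 1
    · have : p = ⟨d - 1, by omega⟩ := Fin.ext (show p.val = d - 1 by omega)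
      rw [this]; exact hdes
    · by_contra hnot
      have hne : σ p ≠ σ ⟨d, hd2⟩ := fun hh => by
        have := σ.injective hh
        have := congrArg Fin.val this
        simp at this; omega
      have hlt : σ p < σ ⟨d, hd2⟩ := lt_of_le_of_ne (not_lt.1 hnot) hne
      exact hav.1 (contains132_of (i := p) (j := ⟨d - 1, by omega⟩) (k := ⟨d, hd2⟩)
        (Fin.lt_def.2 (show p.val < d - 1 by omega))
        (Fin.lt_def.2 (show d - 1 < d by omega))
        hlt hdes)
  intro p q hp hq
  by_cases hq1 : q.val = d
  · have : q = ⟨d, hd2⟩ := Fin.ext (show q.val = d by omega)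
    rw [this]; exact stepA p hp
  · by_contra hnot
    have hne : σ p ≠ σ q := fun hh => by
      have := congrArg Fin.val (σ.injective hh); omega
    have hlt : σ p < σ q := lt_of_le_of_ne (not_lt.1 hnot) hne
    exact hav.2 (contains213_of (i := p) (j := ⟨d, hd2⟩) (k := q)
      (Fin.lt_def.2 (show p.val < d by omega))
      (Fin.lt_def.2 (show d < q.val by omega))
      (stepA p hp) hlt)

/-- In an avoider, a run with no descents increases by exactly one each step. -/
lemma run_avoid {σ : Equiv.Perm (Fin n)}
    (hav : permAvoids σ p132 ∧ permAvoids σ p213) :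
    ∀ (k : ℕ) (p : Fin n) (h : p.val + k < n),
      (∀ s ∈ desSet σ, ¬(p.val < s ∧ s ≤ p.val + k)) →
      (σ ⟨p.val + k, h⟩).val = (σ p).val + k := by
  intro k
  induction k with
  | zero =>
    intro p h _
    congr 1
  | succ k ih =>
    intro p h hno
    have hm : p.val + k < n := by omega
    have ihm := ih p hm (fun s hs hh => hno s hs ⟨hh.1, by omega⟩)
    have hrs : p.val + (k + 1) ∉ desSet σ := fun hmem => hno _ hmem ⟨by omega, le_refl _⟩
    have hdes_iff := mem_desSet (σ := σ) (i := p.val + (k + 1)) (by omega) h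
    have hmk : (⟨p.val + (k + 1) - 1, by omega⟩ : Fin n) = ⟨p.val + k, hm⟩ :=
      Fin.ext (show p.val + (k + 1) - 1 = p.val + k by omega)
    have hnotdes : ¬ (σ ⟨p.val + (k + 1), h⟩ < σ ⟨p.val + k, hm⟩) := by
      intro hh
      apply hrs
      rw [hdes_iff, hmk]
      exact hh
    have hne : σ ⟨p.val + k, hm⟩ ≠ σ ⟨p.val + (k + 1), h⟩ := fun hh => by
      have := congrArg Fin.val (σ.injective hh)
      simp only [Fin.val_mk] at this
      omega
    have hasc : σ ⟨p.val + k, hm⟩ < σ ⟨p.val + (k + 1), h⟩ :=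
      lt_of_le_of_ne (not_lt.1 hnotdes) hne
    have hstep := ascent_succ hav (r := ⟨p.val + (k + 1), h⟩) (p := ⟨p.val + k, hm⟩) rfl hasc
    omega

end Frag2
section Frag3
variable {n : ℕ}
open MD

lemma card_lt_filter (σ : Equiv.Perm (Fin n)) (p : Fin n) :
    (Finset.univ.filter fun q : Fin n => σ q < σ p).card = (σ p).val := by
  rw [← Fin.card_Iio (σ p)]
  apply Finset.card_nbij (i := fun q => σ q)
  · intro q hq
    simp only [Finset.mem_coe, Finset.mem_filter, Finset.mem_univ, true_and] at hq
    simpa [Finset.mem_Iio] using hq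
  · intro a ha b hb hab
    exact σ.injective hab
  · intro v hv
    refine ⟨σ.symm v, ?_, by simp⟩
    simp only [Set.mem_setOf_eq, Finset.coe_filter, Finset.mem_univ, true_and,
      Equiv.apply_symm_apply]
    simpa [Finset.mem_Iio] using hv

lemma card_val_filter (P : ℕ → Prop) :
    (Finset.univ.filter fun q : Fin n => P q.val).card
      = ((Finset.range n).filter P).card := by
  apply Finset.card_nbij (i := fun q => q.val)
  · intro q hq
    simp only [Finset.mem_coe, Finset.mem_filter, Finset.mem_univ, true_and] at hq
    simp [Finset.mem_filter, Finset.mem_range, q.isLt, hq]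
  · intro a _ b _ hab
    exact Fin.ext hab
  · intro m hm
    simp only [Finset.coe_filter, Finset.mem_range, Set.mem_setOf_eq] at hm
    exact ⟨⟨m, hm.1⟩, by simp [hm.2], rfl⟩

lemma card_special (a b c : ℕ) (hab : a ≤ b) (hbc : b ≤ c) (hcn : c ≤ n) :
    (Finset.univ.filter fun q : Fin n => (a ≤ q.val ∧ q.val < b) ∨ c ≤ q.val).card
      = (b - a) + (n - c) := by
  have key : (Finset.univ.filter fun q : Fin n => (a ≤ q.val ∧ q.val < b) ∨ c ≤ q.val).card
      = (Finset.Ico a b ∪ Finset.Ico c n).card := by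
    apply Finset.card_nbij (i := fun q => q.val)
    · intro q hq
      simp only [Finset.mem_coe, Finset.mem_filter, Finset.mem_univ, true_and] at hq
      simp only [Finset.mem_coe, Finset.mem_union, Finset.mem_Ico]
      have := q.isLt
      omega
    · intro x _ y _ hxy
      exact Fin.ext hxy
    · intro m hm
      simp only [Finset.coe_union, Finset.coe_Ico, Set.mem_union, Set.mem_Ico] at hm
      have hmn : m < n := by omega
      refine ⟨⟨m, hmn⟩, ?_, rfl⟩
      simp only [Finset.coe_filter, Finset.mem_univ, true_and, Set.mem_setOf_eq]
      omega
  rw [key, Finset.card_union_of_disjoint, Nat.card_Ico, Nat.card_Ico]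
  rw [Finset.disjoint_left]
  intro m hm1 hm2
  rw [Finset.mem_Ico] at hm1 hm2
  omega

/-- Any avoider equals the canonical permutation attached to its descent set. -/
lemma avoider_eq_fperm {σ : Equiv.Perm (Fin n)}
    (hav : permAvoids σ p132 ∧ permAvoids σ p213) : σ = fperm n (desSet σ) := by
  apply Equiv.ext
  intro p
  apply Fin.ext
  rw [fperm_apply]
  show (σ p).val = fval n (desSet σ) p.val
  have hstart_le := startS_le (desSet σ) p.val
  have hlt_end := lt_endS (n := n) (S := desSet σ) p.isLt
  have hend_le := endS_le_n (n := n) (desSet σ) p.val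
  have hset : ∀ q : Fin n, σ q < σ p ↔
      ((startS (desSet σ) p.val ≤ q.val ∧ q.val < p.val) ∨ endS n (desSet σ) p.val ≤ q.val) := by
    intro q
    constructor
    · intro hlt
      by_contra hnot
      push_neg at hnot
      rcases (by omega : q.val < startS (desSet σ) p.val ∨
          (p.val ≤ q.val ∧ q.val < endS n (desSet σ) p.val)) with hc | ⟨hc1, hc2⟩
      · have h0 : 0 < startS (desSet σ) p.val := by omega
        have hdmem : startS (desSet σ) p.val ∈ desSet σ := startS_mem h0
        have := cross_avoid hav hdmem q p hc hstart_le
        exact absurd hlt (lt_asymm this)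
      · have hrun := run_avoid hav (q.val - p.val) p (by omega)
          (fun s hs hh => by
            have := endS_le (n := n) hs hh.1
            omega)
        have hq : (⟨p.val + (q.val - p.val), by omega⟩ : Fin n) = q :=
          Fin.ext (show p.val + (q.val - p.val) = q.val by omega)
        rw [hq] at hrun
        have : (σ q).val < (σ p).val := hlt
        omega
    · rintro (⟨h1, h2⟩ | h3)
      · have hrun := run_avoid hav (p.val - q.val) q (by omega)
          (fun s hs hh => by
            have := le_startS hs (show s ≤ p.val by omega)
            omega)
        have hp' : (⟨q.val + (p.val - q.val), by omega⟩ : Fin n) = p :=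
          Fin.ext (show q.val + (p.val - q.val) = p.val by omega)
        rw [hp'] at hrun
        rw [Fin.lt_def]
        omega
      · have hend_lt : endS n (desSet σ) p.val < n := lt_of_le_of_lt h3 q.isLt
        have hdmem : endS n (desSet σ) p.val ∈ desSet σ := endS_mem hend_lt
        exact cross_avoid hav hdmem p q hlt_end h3
  have hc1 := card_lt_filter σ p
  rw [← hc1]
  have heq : (Finset.univ.filter fun q : Fin n => σ q < σ p)
      = Finset.univ.filter fun q : Fin n =>
          ((startS (desSet σ) p.val ≤ q.val ∧ q.val < p.val)
            ∨ endS n (desSet σ) p.val ≤ q.val) :=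
    Finset.filter_congr (fun q _ => hset q)
  rw [heq, card_special _ _ _ hstart_le (by omega) hend_le]
  unfold fval
  omega

end Frag3
theorem maj_des_132_213 (n : ℕ) (q t : ℚ) :
    ∑ σ ∈ Finset.univ.filter
        (fun σ : Equiv.Perm (Fin n) => permAvoids σ p132 ∧ permAvoids σ p213),
      q ^ majIdx σ * t ^ desNum σ
      = ∏ i ∈ Finset.range (n - 1), (1 + q ^ (i + 1) * t) := by
  have hbij : (∑ σ ∈ Finset.univ.filter
        (fun σ : Equiv.Perm (Fin n) => permAvoids σ p132 ∧ permAvoids σ p213),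
      q ^ majIdx σ * t ^ desNum σ)
      = ∑ S ∈ (Finset.Ico 1 n).powerset, q ^ (∑ i ∈ S, i) * t ^ S.card := by
    refine Finset.sum_bij' (fun σ _ => desSet σ) (fun S _ => MD.fperm n S) ?_ ?_ ?_ ?_ ?_
    · intro σ _
      exact Finset.mem_powerset.2 (desSet_subset σ)
    · intro S _
      simp only [Finset.mem_filter, Finset.mem_univ, true_and]
      exact ⟨fperm_avoids_132 S, fperm_avoids_213 S⟩
    · intro σ hσ
      simp only [Finset.mem_filter, Finset.mem_univ, true_and] at hσ
      exact (avoider_eq_fperm hσ).symm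
    · intro S hS
      exact desSet_fperm S (Finset.mem_powerset.1 hS)
    · intro σ _
      rfl
  rw [hbij]
  have h2 : ∀ T ∈ (Finset.Ico 1 n).powerset,
      q ^ (∑ i ∈ T, i) * t ^ T.card
        = (∏ i ∈ T, q ^ i * t) * ∏ i ∈ Finset.Ico 1 n \ T, (1 : ℚ) := by
    intro T _
    rw [Finset.prod_const_one, mul_one, Finset.prod_mul_distrib,
      Finset.prod_pow_eq_pow_sum, Finset.prod_const]
  rw [Finset.sum_congr rfl h2, ← Finset.prod_add]
  rw [Finset.prod_Ico_eq_prod_range (fun i => q ^ i * t + 1) 1 n]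
  apply Finset.prod_congr rfl
  intro i _
  ring
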